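/- The variance of the scaled perimeter satisfies Var(P_m) = (8/m²)·p(1−p)·( (7m² − 13m + 4)p² − 7m(m−1)p + 2m² ). -/

import Mathlib

open MeasureTheory ProbabilityTheory Finset Filter

set_option linter.unusedSectionVars false

noncomputable section

/-- The scaled total area `A_{m} = (1/m) ∑_{i,j=1}^m Z_{i,j}` of a binary image `Z`. -/
def areaSum (m : ℕ) (Z : ℕ → ℕ → ℝ) : ℝ :=
  (1 / (m : ℝ)) * ∑ i ∈ Finset.Icc 1 m, ∑ j ∈ Finset.Icc 1 m, Z i j

/-- The scaled perimeter `P_{m} = (1/m) ∑_{i,j=1}^m ψ(i,j)` of a binary image `Z`,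
where `ψ(i,j) = 0` if `Z i j = 0` and `ψ(i,j) = 4 - (Z (i-1) j + Z (i+1) j + Z i (j-1) + Z i (j+1))`
if `Z i j = 1`. -/
def perimSum (m : ℕ) (Z : ℕ → ℕ → ℝ) : ℝ :=
  (1 / (m : ℝ)) * ∑ i ∈ Finset.Icc 1 m, ∑ j ∈ Finset.Icc 1 m,
    (if Z i j = 1 then 4 - (Z (i - 1) j + Z (i + 1) j + Z i (j - 1) + Z i (j + 1)) else 0)

/-- The scaled Euler characteristic `χ_{m} = (1/m) ∑_{i,j=1}^m W_{i,j}` of a binary image `Z`,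
where, with `S = Z i j + Z (i+1) j + Z i (j+1) + Z (i+1) (j+1)`: `W = 1/4` if `S = 1`;
`W = -1/4` if `S = 3`; `W = -1/2` if `S = 2` and one of the two diagonal products is `1`;
and `W = 0` otherwise. -/
def eulerSum (m : ℕ) (Z : ℕ → ℕ → ℝ) : ℝ :=
  (1 / (m : ℝ)) * ∑ i ∈ Finset.Icc 1 m, ∑ j ∈ Finset.Icc 1 m,
    (if Z i j + Z (i + 1) j + Z i (j + 1) + Z (i + 1) (j + 1) = 1 then (1 / 4 : ℝ)
      else if Z i j + Z (i + 1) j + Z i (j + 1) + Z (i + 1) (j + 1) = 3 then -(1 / 4)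
      else if Z i j + Z (i + 1) j + Z i (j + 1) + Z (i + 1) (j + 1) = 2 ∧
          (Z i j * Z (i + 1) (j + 1) = 1 ∨ Z (i + 1) j * Z i (j + 1) = 1) then -(1 / 2)
      else 0)

section Helpers

variable {Ω : Type*} [MeasureSpace Ω] [IsProbabilityMeasure (ℙ : Measure Ω)]

omit [IsProbabilityMeasure (ℙ : Measure Ω)] in
lemma variance_congr_ae {X Y : Ω → ℝ} (h : X =ᵐ[ℙ] Y) :
    variance X ℙ = variance Y ℙ := by
  unfold ProbabilityTheory.variance ProbabilityTheory.evariance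
  have hi : (ℙ : Measure Ω)[X] = (ℙ : Measure Ω)[Y] := integral_congr_ae h
  congr 1
  rw [hi]
  apply lintegral_congr_ae
  filter_upwards [h] with ω hω
  rw [hω]

lemma integrable_of_bounded_one {f : Ω → ℝ} (hm : Measurable f)
    (hb : ∀ ω, |f ω| ≤ 1) : Integrable f ℙ := by
  refine Integrable.mono' (integrable_const 1) hm.aestronglyMeasurable
    (ae_of_all _ fun ω => ?_)
  simpa [Real.norm_eq_abs] using hb ω

lemma integral_sum_mul_sum {α β : Type*} (s : Finset α) (t : Finset β)
    (f : α → Ω → ℝ) (g : β → Ω → ℝ)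
    (hfm : ∀ a, Measurable (f a)) (hgm : ∀ b, Measurable (g b))
    (hfb : ∀ a ω, |f a ω| ≤ 1) (hgb : ∀ b ω, |g b ω| ≤ 1) :
    ∫ ω, (∑ a ∈ s, f a ω) * (∑ b ∈ t, g b ω) =
      ∑ a ∈ s, ∑ b ∈ t, ∫ ω, f a ω * g b ω := by
  have hint : ∀ a b, Integrable (fun ω => f a ω * g b ω) ℙ := by
    intro a b
    refine integrable_of_bounded_one ((hfm a).mul (hgm b)) fun ω => ?_
    rw [abs_mul]
    exact mul_le_one₀ (hfb a ω) (abs_nonneg _) (hgb b ω)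
  calc ∫ ω, (∑ a ∈ s, f a ω) * (∑ b ∈ t, g b ω)
      = ∫ ω, ∑ a ∈ s, ∑ b ∈ t, f a ω * g b ω :=
        integral_congr_ae (ae_of_all _ fun ω => by simp only [Finset.sum_mul_sum])
    _ = ∑ a ∈ s, ∫ ω, ∑ b ∈ t, f a ω * g b ω :=
        integral_finset_sum s fun a _ => integrable_finset_sum t fun b _ => hint a b
    _ = ∑ a ∈ s, ∑ b ∈ t, ∫ ω, f a ω * g b ω :=
        Finset.sum_congr rfl fun a _ => integral_finset_sum t fun b _ => hint a b

end Helpers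

section Moments

variable {Ω : Type*} [MeasureSpace Ω] [IsProbabilityMeasure (ℙ : Measure Ω)]
variable {m : ℕ} {p : ℝ} {W : ℕ → ℕ → Ω → ℝ}

omit [IsProbabilityMeasure (ℙ : Measure Ω)] in
lemma habsW (hW01 : ∀ i j ω, W i j ω = 0 ∨ W i j ω = 1) (i j : ℕ) (ω : Ω) :
    |W i j ω| ≤ 1 := by rcases hW01 i j ω with h | h <;> simp [h]

omit [IsProbabilityMeasure (ℙ : Measure Ω)] in
lemma habsW2 (hW01 : ∀ i j ω, W i j ω = 0 ∨ W i j ω = 1) (i j k l : ℕ) (ω : Ω) :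
    |W i j ω * W k l ω| ≤ 1 := by
  rw [abs_mul]
  exact mul_le_one₀ (habsW hW01 i j ω) (abs_nonneg _) (habsW hW01 k l ω)

omit [IsProbabilityMeasure (ℙ : Measure Ω)] in
lemma hsqW (hW01 : ∀ i j ω, W i j ω = 0 ∨ W i j ω = 1) (i j : ℕ) (ω : Ω) :
    W i j ω * W i j ω = W i j ω := by rcases hW01 i j ω with h | h <;> simp [h]

omit [IsProbabilityMeasure (ℙ : Measure Ω)] in
lemma hE1W
    (hE : ∀ l : Finset (ℕ × ℕ), l ⊆ Finset.Icc 1 m ×ˢ Finset.Icc 1 m →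
      ∫ ω, ∏ c ∈ l, W c.1 c.2 ω = p ^ l.card)
    {a : ℕ × ℕ} (ha : a ∈ Finset.Icc 1 m ×ˢ Finset.Icc 1 m) :
    ∫ ω, W a.1 a.2 ω = p := by
  have h := hE {a} (by simpa using ha)
  simpa using h

omit [IsProbabilityMeasure (ℙ : Measure Ω)] in
lemma hE2W
    (hE : ∀ l : Finset (ℕ × ℕ), l ⊆ Finset.Icc 1 m ×ˢ Finset.Icc 1 m →
      ∫ ω, ∏ c ∈ l, W c.1 c.2 ω = p ^ l.card)
    {a b : ℕ × ℕ} (ha : a ∈ Finset.Icc 1 m ×ˢ Finset.Icc 1 m)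
    (hb : b ∈ Finset.Icc 1 m ×ˢ Finset.Icc 1 m) (hab : a ≠ b) :
    ∫ ω, W a.1 a.2 ω * W b.1 b.2 ω = p ^ 2 := by
  have hna : a ∉ ({b} : Finset (ℕ × ℕ)) := by simpa using hab
  have h := hE {a, b} (by intro x hx; simp at hx; rcases hx with rfl | rfl <;> assumption)
  simp only [Finset.prod_insert hna, Finset.prod_singleton] at h
  rw [Finset.card_insert_of_notMem hna, Finset.card_singleton] at h
  exact h

omit [IsProbabilityMeasure (ℙ : Measure Ω)] in
lemma hE3W
    (hE : ∀ l : Finset (ℕ × ℕ), l ⊆ Finset.Icc 1 m ×ˢ Finset.Icc 1 m →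
      ∫ ω, ∏ c ∈ l, W c.1 c.2 ω = p ^ l.card)
    {a b c : ℕ × ℕ} (ha : a ∈ Finset.Icc 1 m ×ˢ Finset.Icc 1 m)
    (hb : b ∈ Finset.Icc 1 m ×ˢ Finset.Icc 1 m)
    (hc : c ∈ Finset.Icc 1 m ×ˢ Finset.Icc 1 m)
    (hab : a ≠ b) (hac : a ≠ c) (hbc : b ≠ c) :
    ∫ ω, W a.1 a.2 ω * (W b.1 b.2 ω * W c.1 c.2 ω) = p ^ 3 := by
  have hna : a ∉ ({b, c} : Finset (ℕ × ℕ)) := by simp [hab, hac]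
  have hnb : b ∉ ({c} : Finset (ℕ × ℕ)) := by simpa using hbc
  have h := hE {a, b, c}
    (by intro x hx; simp at hx; rcases hx with rfl | rfl | rfl <;> assumption)
  simp only [Finset.prod_insert hna, Finset.prod_insert hnb, Finset.prod_singleton] at h
  rw [Finset.card_insert_of_notMem hna, Finset.card_insert_of_notMem hnb,
    Finset.card_singleton] at h
  exact h

omit [IsProbabilityMeasure (ℙ : Measure Ω)] in
lemma hE4W
    (hE : ∀ l : Finset (ℕ × ℕ), l ⊆ Finset.Icc 1 m ×ˢ Finset.Icc 1 m →
      ∫ ω, ∏ c ∈ l, W c.1 c.2 ω = p ^ l.card)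
    {a b c d : ℕ × ℕ} (ha : a ∈ Finset.Icc 1 m ×ˢ Finset.Icc 1 m)
    (hb : b ∈ Finset.Icc 1 m ×ˢ Finset.Icc 1 m)
    (hc : c ∈ Finset.Icc 1 m ×ˢ Finset.Icc 1 m)
    (hd : d ∈ Finset.Icc 1 m ×ˢ Finset.Icc 1 m)
    (hab : a ≠ b) (hac : a ≠ c) (had : a ≠ d) (hbc : b ≠ c) (hbd : b ≠ d) (hcd : c ≠ d) :
    ∫ ω, W a.1 a.2 ω * (W b.1 b.2 ω * (W c.1 c.2 ω * W d.1 d.2 ω)) = p ^ 4 := by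
  have hna : a ∉ ({b, c, d} : Finset (ℕ × ℕ)) := by simp [hab, hac, had]
  have hnb : b ∉ ({c, d} : Finset (ℕ × ℕ)) := by simp [hbc, hbd]
  have hnc : c ∉ ({d} : Finset (ℕ × ℕ)) := by simpa using hcd
  have h := hE {a, b, c, d}
    (by intro x hx; simp at hx; rcases hx with rfl | rfl | rfl | rfl <;> assumption)
  simp only [Finset.prod_insert hna, Finset.prod_insert hnb, Finset.prod_insert hnc,
    Finset.prod_singleton] at h
  rw [Finset.card_insert_of_notMem hna, Finset.card_insert_of_notMem hnb,
    Finset.card_insert_of_notMem hnc, Finset.card_singleton] at h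
  exact h

omit [IsProbabilityMeasure (ℙ : Measure Ω)] in
lemma sum_ite_count (P : ℕ → Prop) [DecidablePred P] (A : Finset ℕ) (x : ℝ) :
    (∑ i ∈ A, if P i then x else 0) = (A.filter P).card * x := by
  rw [← Finset.sum_filter, Finset.sum_const, nsmul_eq_mul]

lemma sum_prod_ite_fst (P : ℕ → Prop) [DecidablePred P] (A B : Finset ℕ) (x : ℝ) :
    (∑ c ∈ A ×ˢ B, if P c.1 then x else 0) = (A.filter P).card * ((B.card : ℝ) * x) := by
  rw [Finset.sum_product]
  calc ∑ i ∈ A, ∑ _j ∈ B, (if P i then x else 0)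
      = ∑ i ∈ A, (if P i then (B.card : ℝ) * x else 0) := by
        apply Finset.sum_congr rfl; intro i _
        rw [Finset.sum_const, nsmul_eq_mul]
        by_cases h : P i <;> simp [h]
    _ = (A.filter P).card * ((B.card : ℝ) * x) := sum_ite_count P A _

lemma sum_prod_ite_snd (Q : ℕ → Prop) [DecidablePred Q] (A B : Finset ℕ) (x : ℝ) :
    (∑ c ∈ A ×ˢ B, if Q c.2 then x else 0) = (A.card : ℝ) * (((B.filter Q).card : ℝ) * x) := by
  rw [Finset.sum_product]
  calc ∑ _i ∈ A, ∑ j ∈ B, (if Q j then x else 0)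
      = ∑ _i ∈ A, (((B.filter Q).card : ℝ) * x) := by
        apply Finset.sum_congr rfl; intro i _
        exact sum_ite_count Q B x
    _ = (A.card : ℝ) * (((B.filter Q).card : ℝ) * x) := by
        rw [Finset.sum_const, nsmul_eq_mul]

variable (m : ℕ) (p : ℝ) (W : ℕ → ℕ → Ω → ℝ)

def hEhyp : Prop := ∀ l : Finset (ℕ × ℕ), l ⊆ Finset.Icc 1 m ×ˢ Finset.Icc 1 m →
      ∫ ω, ∏ c ∈ l, W c.1 c.2 ω = p ^ l.card

variable {m p W}

lemma expS (hm : 3 ≤ m) (hWm : ∀ i j, Measurable (W i j))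
    (hW01 : ∀ i j ω, W i j ω = 0 ∨ W i j ω = 1) (hE : hEhyp m p W) :
    ∫ ω, ∑ c ∈ Finset.Icc 1 m ×ˢ Finset.Icc 1 m, W c.1 c.2 ω = (m : ℝ) ^ 2 * p := by
  rw [integral_finset_sum _ (fun c _ =>
    integrable_of_bounded_one (hWm c.1 c.2) (fun ω => habsW hW01 c.1 c.2 ω))]
  rw [Finset.sum_congr rfl fun c hc => hE1W hE hc]
  rw [Finset.sum_const, nsmul_eq_mul, Finset.card_product, Nat.card_Icc]
  simp only [Nat.add_sub_cancel]
  push_cast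
  ring

lemma expH (hm : 3 ≤ m) (hWm : ∀ i j, Measurable (W i j))
    (hW01 : ∀ i j ω, W i j ω = 0 ∨ W i j ω = 1) (hE : hEhyp m p W) :
    ∫ ω, ∑ c ∈ Finset.Icc 1 (m - 1) ×ˢ Finset.Icc 1 m, W c.1 c.2 ω * W (c.1 + 1) c.2 ω
      = (m : ℝ) * ((m : ℝ) - 1) * p ^ 2 := by
  rw [integral_finset_sum _ (fun c _ =>
    integrable_of_bounded_one ((hWm c.1 c.2).mul (hWm (c.1 + 1) c.2))
      (fun ω => habsW2 hW01 _ _ _ _ ω))]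
  have key : ∀ c ∈ Finset.Icc 1 (m - 1) ×ˢ Finset.Icc 1 m,
      ∫ ω, W c.1 c.2 ω * W (c.1 + 1) c.2 ω = p ^ 2 := by
    intro c hc
    simp only [Finset.mem_product, Finset.mem_Icc] at hc
    exact hE2W hE (a := c) (b := (c.1 + 1, c.2))
      (by simp only [Finset.mem_product, Finset.mem_Icc]; omega)
      (by simp only [Finset.mem_product, Finset.mem_Icc]; omega)
      (by simp [Prod.ext_iff])
  rw [Finset.sum_congr rfl key, Finset.sum_const, nsmul_eq_mul, Finset.card_product,
    Nat.card_Icc, Nat.card_Icc]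
  simp only [Nat.add_sub_cancel]
  have hm1 : ((m - 1 : ℕ) : ℝ) = (m : ℝ) - 1 := by
    rw [Nat.cast_sub (by omega)]; norm_num
  push_cast [hm1]
  ring

lemma expSS (hm : 3 ≤ m) (hWm : ∀ i j, Measurable (W i j))
    (hW01 : ∀ i j ω, W i j ω = 0 ∨ W i j ω = 1) (hE : hEhyp m p W) :
    ∫ ω, (∑ c ∈ Finset.Icc 1 m ×ˢ Finset.Icc 1 m, W c.1 c.2 ω) *
         (∑ c ∈ Finset.Icc 1 m ×ˢ Finset.Icc 1 m, W c.1 c.2 ω)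
      = (m : ℝ) ^ 4 * p ^ 2 + (m : ℝ) ^ 2 * (p - p ^ 2) := by
  have step := integral_sum_mul_sum (Finset.Icc 1 m ×ˢ Finset.Icc 1 m)
    (Finset.Icc 1 m ×ˢ Finset.Icc 1 m)
    (fun c ω => W c.1 c.2 ω) (fun c ω => W c.1 c.2 ω)
    (fun c => hWm c.1 c.2) (fun c => hWm c.1 c.2)
    (fun c ω => habsW hW01 _ _ ω) (fun c ω => habsW hW01 _ _ ω)
  beta_reduce at step
  rw [step]
  have key : ∀ c ∈ Finset.Icc 1 m ×ˢ Finset.Icc 1 m,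
      ∀ d ∈ Finset.Icc 1 m ×ˢ Finset.Icc 1 m,
      ∫ ω, W c.1 c.2 ω * W d.1 d.2 ω = p ^ 2 + (if d = c then p - p ^ 2 else 0) := by
    intro c hc d hd
    by_cases h : d = c
    · subst h
      rw [if_pos rfl,
        integral_congr_ae (ae_of_all _ fun ω => hsqW hW01 d.1 d.2 ω), hE1W hE hd]
      ring
    · rw [if_neg h, add_zero]
      exact hE2W hE hc hd (fun hcd => h (hcd.symm))
  rw [Finset.sum_congr rfl fun c hc => Finset.sum_congr rfl fun d hd => key c hc d hd]
  simp only [Finset.sum_add_distrib]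
  have h1 : ∀ c ∈ Finset.Icc 1 m ×ˢ Finset.Icc 1 m,
      (∑ d ∈ Finset.Icc 1 m ×ˢ Finset.Icc 1 m, if d = c then p - p ^ 2 else 0)
        = p - p ^ 2 := by
    intro c hc
    rw [Finset.sum_ite_eq' (Finset.Icc 1 m ×ˢ Finset.Icc 1 m) c (fun _ => p - p ^ 2),
      if_pos hc]
  rw [Finset.sum_congr rfl h1]
  simp only [Finset.sum_const, nsmul_eq_mul, Finset.card_product, Nat.card_Icc,
    Nat.add_sub_cancel]
  push_cast
  ring

omit [IsProbabilityMeasure (ℙ : Measure Ω)] in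
lemma hE1W' (hE : hEhyp m p W) (a1 a2 : ℕ)
    (ha : 1 ≤ a1 ∧ a1 ≤ m ∧ 1 ≤ a2 ∧ a2 ≤ m) :
    ∫ ω, W a1 a2 ω = p :=
  hE1W hE (a := (a1, a2)) (by simp only [Finset.mem_product, Finset.mem_Icc]; omega)

omit [IsProbabilityMeasure (ℙ : Measure Ω)] in
lemma hE2W' (hE : hEhyp m p W) (a1 a2 b1 b2 : ℕ)
    (ha : 1 ≤ a1 ∧ a1 ≤ m ∧ 1 ≤ a2 ∧ a2 ≤ m)
    (hb : 1 ≤ b1 ∧ b1 ≤ m ∧ 1 ≤ b2 ∧ b2 ≤ m)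
    (hne : ¬(a1 = b1 ∧ a2 = b2)) :
    ∫ ω, W a1 a2 ω * W b1 b2 ω = p ^ 2 :=
  hE2W hE (a := (a1, a2)) (b := (b1, b2))
    (by simp only [Finset.mem_product, Finset.mem_Icc]; omega)
    (by simp only [Finset.mem_product, Finset.mem_Icc]; omega)
    (by simpa [Prod.ext_iff] using hne)

omit [IsProbabilityMeasure (ℙ : Measure Ω)] in
lemma hE3W' (hE : hEhyp m p W) (a1 a2 b1 b2 c1 c2 : ℕ)
    (ha : 1 ≤ a1 ∧ a1 ≤ m ∧ 1 ≤ a2 ∧ a2 ≤ m)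
    (hb : 1 ≤ b1 ∧ b1 ≤ m ∧ 1 ≤ b2 ∧ b2 ≤ m)
    (hc : 1 ≤ c1 ∧ c1 ≤ m ∧ 1 ≤ c2 ∧ c2 ≤ m)
    (hab : ¬(a1 = b1 ∧ a2 = b2)) (hac : ¬(a1 = c1 ∧ a2 = c2))
    (hbc : ¬(b1 = c1 ∧ b2 = c2)) :
    ∫ ω, W a1 a2 ω * (W b1 b2 ω * W c1 c2 ω) = p ^ 3 :=
  hE3W hE (a := (a1, a2)) (b := (b1, b2)) (c := (c1, c2))
    (by simp only [Finset.mem_product, Finset.mem_Icc]; omega)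
    (by simp only [Finset.mem_product, Finset.mem_Icc]; omega)
    (by simp only [Finset.mem_product, Finset.mem_Icc]; omega)
    (by simpa [Prod.ext_iff] using hab)
    (by simpa [Prod.ext_iff] using hac)
    (by simpa [Prod.ext_iff] using hbc)

omit [IsProbabilityMeasure (ℙ : Measure Ω)] in
lemma hE4W' (hE : hEhyp m p W) (a1 a2 b1 b2 c1 c2 d1 d2 : ℕ)
    (ha : 1 ≤ a1 ∧ a1 ≤ m ∧ 1 ≤ a2 ∧ a2 ≤ m)
    (hb : 1 ≤ b1 ∧ b1 ≤ m ∧ 1 ≤ b2 ∧ b2 ≤ m)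
    (hc : 1 ≤ c1 ∧ c1 ≤ m ∧ 1 ≤ c2 ∧ c2 ≤ m)
    (hd : 1 ≤ d1 ∧ d1 ≤ m ∧ 1 ≤ d2 ∧ d2 ≤ m)
    (hab : ¬(a1 = b1 ∧ a2 = b2)) (hac : ¬(a1 = c1 ∧ a2 = c2))
    (had : ¬(a1 = d1 ∧ a2 = d2)) (hbc : ¬(b1 = c1 ∧ b2 = c2))
    (hbd : ¬(b1 = d1 ∧ b2 = d2)) (hcd : ¬(c1 = d1 ∧ c2 = d2)) :
    ∫ ω, W a1 a2 ω * (W b1 b2 ω * (W c1 c2 ω * W d1 d2 ω)) = p ^ 4 :=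
  hE4W hE (a := (a1, a2)) (b := (b1, b2)) (c := (c1, c2)) (d := (d1, d2))
    (by simp only [Finset.mem_product, Finset.mem_Icc]; omega)
    (by simp only [Finset.mem_product, Finset.mem_Icc]; omega)
    (by simp only [Finset.mem_product, Finset.mem_Icc]; omega)
    (by simp only [Finset.mem_product, Finset.mem_Icc]; omega)
    (by simpa [Prod.ext_iff] using hab)
    (by simpa [Prod.ext_iff] using hac)
    (by simpa [Prod.ext_iff] using had)
    (by simpa [Prod.ext_iff] using hbc)
    (by simpa [Prod.ext_iff] using hbd)
    (by simpa [Prod.ext_iff] using hcd)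

omit [MeasureSpace Ω] [IsProbabilityMeasure (ℙ : Measure Ω)] in
lemma filter_Icc_card_eq (a b c d : ℕ) (P : ℕ → Prop) [DecidablePred P]
    (h : ∀ k, (k ∈ Finset.Icc a b ∧ P k) ↔ k ∈ Finset.Icc c d) :
    ((Finset.Icc a b).filter P).card = d + 1 - c := by
  rw [show (Finset.Icc a b).filter P = Finset.Icc c d from by
    ext k; rw [Finset.mem_filter]; exact h k, Nat.card_Icc]
lemma expSH (hm : 3 ≤ m) (hWm : ∀ i j, Measurable (W i j))
    (hW01 : ∀ i j ω, W i j ω = 0 ∨ W i j ω = 1) (hE : hEhyp m p W) :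
    ∫ ω, (∑ c ∈ Finset.Icc 1 m ×ˢ Finset.Icc 1 m, W c.1 c.2 ω) *
         (∑ c ∈ Finset.Icc 1 (m - 1) ×ˢ Finset.Icc 1 m, W c.1 c.2 ω * W (c.1 + 1) c.2 ω)
      = (m : ℝ) ^ 3 * ((m : ℝ) - 1) * p ^ 3
        + 2 * (m : ℝ) * ((m : ℝ) - 1) * (p ^ 2 - p ^ 3) := by
  have step := integral_sum_mul_sum (Finset.Icc 1 m ×ˢ Finset.Icc 1 m)
    (Finset.Icc 1 (m - 1) ×ˢ Finset.Icc 1 m)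
    (fun c ω => W c.1 c.2 ω) (fun d ω => W d.1 d.2 ω * W (d.1 + 1) d.2 ω)
    (fun c => hWm c.1 c.2) (fun d => (hWm d.1 d.2).mul (hWm (d.1 + 1) d.2))
    (fun c ω => habsW hW01 _ _ ω) (fun d ω => habsW2 hW01 _ _ _ _ ω)
  beta_reduce at step
  rw [step]
  have key : ∀ c ∈ Finset.Icc 1 m ×ˢ Finset.Icc 1 m,
      ∀ d ∈ Finset.Icc 1 (m - 1) ×ˢ Finset.Icc 1 m,
      ∫ ω, W c.1 c.2 ω * (W d.1 d.2 ω * W (d.1 + 1) d.2 ω)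
        = p ^ 3 + ((if c = d then p ^ 2 - p ^ 3 else 0)
            + (if c = (d.1 + 1, d.2) then p ^ 2 - p ^ 3 else 0)) := by
    intro c hc d hd
    simp only [Finset.mem_product, Finset.mem_Icc] at hc hd
    by_cases h1 : c = d
    · have h1' : c.1 = d.1 ∧ c.2 = d.2 := Prod.ext_iff.mp h1
      have e : ∫ ω, W c.1 c.2 ω * (W d.1 d.2 ω * W (d.1 + 1) d.2 ω)
          = ∫ ω, W d.1 d.2 ω * W (d.1 + 1) d.2 ω :=
        integral_congr_ae (ae_of_all _ fun ω => by
          rw [h1'.1, h1'.2]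
          linear_combination W (d.1 + 1) d.2 ω * hsqW hW01 d.1 d.2 ω)
      rw [if_pos h1, if_neg (by simp only [Prod.ext_iff]; omega), e,
        hE2W' hE d.1 d.2 (d.1 + 1) d.2 (by omega) (by omega) (by omega)]
      ring
    · by_cases h2 : c = (d.1 + 1, d.2)
      · have h2' : c.1 = d.1 + 1 ∧ c.2 = d.2 := by
          simpa [Prod.ext_iff] using h2
        have e : ∫ ω, W c.1 c.2 ω * (W d.1 d.2 ω * W (d.1 + 1) d.2 ω)
            = ∫ ω, W d.1 d.2 ω * W (d.1 + 1) d.2 ω :=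
          integral_congr_ae (ae_of_all _ fun ω => by
            rw [h2'.1, h2'.2]
            linear_combination W d.1 d.2 ω * hsqW hW01 (d.1 + 1) d.2 ω)
        rw [if_neg h1, if_pos h2, e,
          hE2W' hE d.1 d.2 (d.1 + 1) d.2 (by omega) (by omega) (by omega)]
        ring
      · have h1' : ¬(c.1 = d.1 ∧ c.2 = d.2) := by simpa [Prod.ext_iff] using h1
        have h2' : ¬(c.1 = d.1 + 1 ∧ c.2 = d.2) := by simpa [Prod.ext_iff] using h2
        rw [if_neg h1, if_neg h2,
          hE3W' hE c.1 c.2 d.1 d.2 (d.1 + 1) d.2 (by omega) (by omega) (by omega)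
            (by omega) (by omega) (by omega)]
        ring
  rw [Finset.sum_congr rfl fun c hc => Finset.sum_congr rfl fun d hd => key c hc d hd]
  simp only [Finset.sum_add_distrib]
  have hB : (∑ c ∈ Finset.Icc 1 m ×ˢ Finset.Icc 1 m,
      ∑ d ∈ Finset.Icc 1 (m - 1) ×ˢ Finset.Icc 1 m,
        if c = d then p ^ 2 - p ^ 3 else 0)
      = ((m - 1 : ℕ) : ℝ) * ((m : ℕ) : ℝ) * (p ^ 2 - p ^ 3) := by
    have inner : ∀ c ∈ Finset.Icc 1 m ×ˢ Finset.Icc 1 m,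
        (∑ d ∈ Finset.Icc 1 (m - 1) ×ˢ Finset.Icc 1 m,
          if c = d then p ^ 2 - p ^ 3 else 0)
        = if c.1 ≤ m - 1 then p ^ 2 - p ^ 3 else 0 := by
      intro c hc
      simp only [Finset.mem_product, Finset.mem_Icc] at hc
      rw [Finset.sum_ite_eq (Finset.Icc 1 (m - 1) ×ˢ Finset.Icc 1 m) c
        (fun _ => p ^ 2 - p ^ 3)]
      exact if_congr (by simp only [Finset.mem_product, Finset.mem_Icc]; omega) rfl rfl
    rw [Finset.sum_congr rfl inner,
      sum_prod_ite_fst (fun i => i ≤ m - 1) (Finset.Icc 1 m) (Finset.Icc 1 m) _,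
      filter_Icc_card_eq 1 m 1 (m - 1) _
        (by intro k; simp only [Finset.mem_Icc]; omega), Nat.card_Icc]
    push_cast
    ring
  have hC : (∑ c ∈ Finset.Icc 1 m ×ˢ Finset.Icc 1 m,
      ∑ d ∈ Finset.Icc 1 (m - 1) ×ˢ Finset.Icc 1 m,
        if c = (d.1 + 1, d.2) then p ^ 2 - p ^ 3 else 0)
      = ((m - 1 : ℕ) : ℝ) * ((m : ℕ) : ℝ) * (p ^ 2 - p ^ 3) := by
    have inner : ∀ c ∈ Finset.Icc 1 m ×ˢ Finset.Icc 1 m,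
        (∑ d ∈ Finset.Icc 1 (m - 1) ×ˢ Finset.Icc 1 m,
          if c = (d.1 + 1, d.2) then p ^ 2 - p ^ 3 else 0)
        = if 2 ≤ c.1 then p ^ 2 - p ^ 3 else 0 := by
      intro c hc
      simp only [Finset.mem_product, Finset.mem_Icc] at hc
      by_cases h2 : 2 ≤ c.1
      · rw [Finset.sum_congr rfl (fun d hd => if_congr
            (show (c = (d.1 + 1, d.2)) ↔ (d = (c.1 - 1, c.2)) from by
              simp only [Prod.ext_iff]; omega) rfl rfl),
          Finset.sum_ite_eq' (Finset.Icc 1 (m - 1) ×ˢ Finset.Icc 1 m)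
            ((c.1 - 1, c.2)) (fun _ => p ^ 2 - p ^ 3),
          if_pos (by simp only [Finset.mem_product, Finset.mem_Icc]; omega), if_pos h2]
      · rw [if_neg h2]
        apply Finset.sum_eq_zero
        intro d hd
        simp only [Finset.mem_product, Finset.mem_Icc] at hd
        rw [if_neg (by simp only [Prod.ext_iff]; omega)]
    rw [Finset.sum_congr rfl inner,
      sum_prod_ite_fst (fun i => 2 ≤ i) (Finset.Icc 1 m) (Finset.Icc 1 m) _,
      filter_Icc_card_eq 1 m 2 m _
        (by intro k; simp only [Finset.mem_Icc]; omega), Nat.card_Icc]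
    push_cast
    ring
  rw [hB, hC]
  simp only [Finset.sum_const, Finset.card_product, Nat.card_Icc, nsmul_eq_mul,
    Nat.add_sub_cancel]
  have hm1 : ((m - 1 : ℕ) : ℝ) = (m : ℝ) - 1 := by
    rw [Nat.cast_sub (by omega)]; norm_num
  push_cast [hm1]
  ring
lemma expHH (hm : 3 ≤ m) (hWm : ∀ i j, Measurable (W i j))
    (hW01 : ∀ i j ω, W i j ω = 0 ∨ W i j ω = 1) (hE : hEhyp m p W) :
    ∫ ω, (∑ c ∈ Finset.Icc 1 (m - 1) ×ˢ Finset.Icc 1 m, W c.1 c.2 ω * W (c.1 + 1) c.2 ω) *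
         (∑ c ∈ Finset.Icc 1 (m - 1) ×ˢ Finset.Icc 1 m, W c.1 c.2 ω * W (c.1 + 1) c.2 ω)
      = (m : ℝ) ^ 2 * ((m : ℝ) - 1) ^ 2 * p ^ 4
        + (m : ℝ) * ((m : ℝ) - 1) * (p ^ 2 - p ^ 4)
        + 2 * (m : ℝ) * ((m : ℝ) - 2) * (p ^ 3 - p ^ 4) := by
  have step := integral_sum_mul_sum (Finset.Icc 1 (m - 1) ×ˢ Finset.Icc 1 m)
    (Finset.Icc 1 (m - 1) ×ˢ Finset.Icc 1 m)
    (fun c ω => W c.1 c.2 ω * W (c.1 + 1) c.2 ω)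
    (fun d ω => W d.1 d.2 ω * W (d.1 + 1) d.2 ω)
    (fun c => (hWm c.1 c.2).mul (hWm (c.1 + 1) c.2))
    (fun d => (hWm d.1 d.2).mul (hWm (d.1 + 1) d.2))
    (fun c ω => habsW2 hW01 _ _ _ _ ω) (fun d ω => habsW2 hW01 _ _ _ _ ω)
  beta_reduce at step
  rw [step]
  have key : ∀ c ∈ Finset.Icc 1 (m - 1) ×ˢ Finset.Icc 1 m,
      ∀ d ∈ Finset.Icc 1 (m - 1) ×ˢ Finset.Icc 1 m,
      ∫ ω, (W c.1 c.2 ω * W (c.1 + 1) c.2 ω) * (W d.1 d.2 ω * W (d.1 + 1) d.2 ω)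
        = p ^ 4 + ((if d = c then p ^ 2 - p ^ 4 else 0)
            + ((if d = (c.1 + 1, c.2) then p ^ 3 - p ^ 4 else 0)
              + (if c = (d.1 + 1, d.2) then p ^ 3 - p ^ 4 else 0))) := by
    intro c hc d hd
    simp only [Finset.mem_product, Finset.mem_Icc] at hc hd
    by_cases h1 : d = c
    · have h1' : d.1 = c.1 ∧ d.2 = c.2 := Prod.ext_iff.mp h1
      have e : ∫ ω, (W c.1 c.2 ω * W (c.1 + 1) c.2 ω) * (W d.1 d.2 ω * W (d.1 + 1) d.2 ω)
          = ∫ ω, W c.1 c.2 ω * W (c.1 + 1) c.2 ω :=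
        integral_congr_ae (ae_of_all _ fun ω => by
          rw [h1'.1, h1'.2]
          linear_combination (W (c.1 + 1) c.2 ω * W (c.1 + 1) c.2 ω) *
              hsqW hW01 c.1 c.2 ω
            + W c.1 c.2 ω * hsqW hW01 (c.1 + 1) c.2 ω)
      rw [if_pos h1, if_neg (by simp only [Prod.ext_iff]; omega),
        if_neg (by simp only [Prod.ext_iff]; omega), e,
        hE2W' hE c.1 c.2 (c.1 + 1) c.2 (by omega) (by omega) (by omega)]
      ring
    · by_cases h2 : d = (c.1 + 1, c.2)
      · have h2' : d.1 = c.1 + 1 ∧ d.2 = c.2 := by simpa [Prod.ext_iff] using h2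
        have e : ∫ ω, (W c.1 c.2 ω * W (c.1 + 1) c.2 ω) * (W d.1 d.2 ω * W (d.1 + 1) d.2 ω)
            = ∫ ω, W c.1 c.2 ω * (W (c.1 + 1) c.2 ω * W (c.1 + 1 + 1) c.2 ω) :=
          integral_congr_ae (ae_of_all _ fun ω => by
            rw [h2'.1, h2'.2]
            linear_combination W c.1 c.2 ω * W (c.1 + 1 + 1) c.2 ω *
              hsqW hW01 (c.1 + 1) c.2 ω)
        rw [if_neg h1, if_pos h2, if_neg (by simp only [Prod.ext_iff]; omega), e,
          hE3W' hE c.1 c.2 (c.1 + 1) c.2 (c.1 + 1 + 1) c.2 (by omega) (by omega)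
            (by omega) (by omega) (by omega) (by omega)]
        ring
      · by_cases h3 : c = (d.1 + 1, d.2)
        · have h3' : c.1 = d.1 + 1 ∧ c.2 = d.2 := by simpa [Prod.ext_iff] using h3
          have e : ∫ ω, (W c.1 c.2 ω * W (c.1 + 1) c.2 ω) *
                (W d.1 d.2 ω * W (d.1 + 1) d.2 ω)
              = ∫ ω, W d.1 d.2 ω * (W (d.1 + 1) d.2 ω * W (d.1 + 1 + 1) d.2 ω) :=
            integral_congr_ae (ae_of_all _ fun ω => by
              rw [h3'.1, h3'.2]
              linear_combination W d.1 d.2 ω * W (d.1 + 1 + 1) d.2 ω *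
                hsqW hW01 (d.1 + 1) d.2 ω)
          rw [if_neg h1, if_neg h2, if_pos h3, e,
            hE3W' hE d.1 d.2 (d.1 + 1) d.2 (d.1 + 1 + 1) d.2 (by omega) (by omega)
              (by omega) (by omega) (by omega) (by omega)]
          ring
        · have h1' : ¬(d.1 = c.1 ∧ d.2 = c.2) := by simpa [Prod.ext_iff] using h1
          have h2' : ¬(d.1 = c.1 + 1 ∧ d.2 = c.2) := by simpa [Prod.ext_iff] using h2
          have h3' : ¬(c.1 = d.1 + 1 ∧ c.2 = d.2) := by simpa [Prod.ext_iff] using h3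
          have e : ∫ ω, (W c.1 c.2 ω * W (c.1 + 1) c.2 ω) *
                (W d.1 d.2 ω * W (d.1 + 1) d.2 ω)
              = ∫ ω, W c.1 c.2 ω * (W (c.1 + 1) c.2 ω * (W d.1 d.2 ω * W (d.1 + 1) d.2 ω)) :=
            integral_congr_ae (ae_of_all _ fun ω => by ring)
          rw [if_neg h1, if_neg h2, if_neg h3, e,
            hE4W' hE c.1 c.2 (c.1 + 1) c.2 d.1 d.2 (d.1 + 1) d.2 (by omega) (by omega)
              (by omega) (by omega) (by omega) (by omega) (by omega) (by omega)
              (by omega) (by omega)]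
          ring
  rw [Finset.sum_congr rfl fun c hc => Finset.sum_congr rfl fun d hd => key c hc d hd]
  simp only [Finset.sum_add_distrib]
  have hB : (∑ c ∈ Finset.Icc 1 (m - 1) ×ˢ Finset.Icc 1 m,
      ∑ d ∈ Finset.Icc 1 (m - 1) ×ˢ Finset.Icc 1 m,
        if d = c then p ^ 2 - p ^ 4 else 0)
      = ((m - 1 : ℕ) : ℝ) * ((m : ℕ) : ℝ) * (p ^ 2 - p ^ 4) := by
    have inner : ∀ c ∈ Finset.Icc 1 (m - 1) ×ˢ Finset.Icc 1 m,
        (∑ d ∈ Finset.Icc 1 (m - 1) ×ˢ Finset.Icc 1 m,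
          if d = c then p ^ 2 - p ^ 4 else 0) = p ^ 2 - p ^ 4 := by
      intro c hc
      rw [Finset.sum_ite_eq' (Finset.Icc 1 (m - 1) ×ˢ Finset.Icc 1 m) c
        (fun _ => p ^ 2 - p ^ 4), if_pos hc]
    rw [Finset.sum_congr rfl inner, Finset.sum_const, nsmul_eq_mul,
      Finset.card_product, Nat.card_Icc, Nat.card_Icc]
    simp only [Nat.add_sub_cancel]
    push_cast
    ring
  have hC : (∑ c ∈ Finset.Icc 1 (m - 1) ×ˢ Finset.Icc 1 m,
      ∑ d ∈ Finset.Icc 1 (m - 1) ×ˢ Finset.Icc 1 m,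
        if d = (c.1 + 1, c.2) then p ^ 3 - p ^ 4 else 0)
      = ((m - 2 : ℕ) : ℝ) * ((m : ℕ) : ℝ) * (p ^ 3 - p ^ 4) := by
    have inner : ∀ c ∈ Finset.Icc 1 (m - 1) ×ˢ Finset.Icc 1 m,
        (∑ d ∈ Finset.Icc 1 (m - 1) ×ˢ Finset.Icc 1 m,
          if d = (c.1 + 1, c.2) then p ^ 3 - p ^ 4 else 0)
        = if c.1 + 1 ≤ m - 1 then p ^ 3 - p ^ 4 else 0 := by
      intro c hc
      simp only [Finset.mem_product, Finset.mem_Icc] at hc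
      rw [Finset.sum_ite_eq' (Finset.Icc 1 (m - 1) ×ˢ Finset.Icc 1 m) ((c.1 + 1, c.2))
        (fun _ => p ^ 3 - p ^ 4)]
      exact if_congr (by simp only [Finset.mem_product, Finset.mem_Icc]; omega) rfl rfl
    rw [Finset.sum_congr rfl inner,
      sum_prod_ite_fst (fun i => i + 1 ≤ m - 1) (Finset.Icc 1 (m - 1)) (Finset.Icc 1 m) _,
      filter_Icc_card_eq 1 (m - 1) 1 (m - 2) _
        (by intro k; simp only [Finset.mem_Icc]; omega), Nat.card_Icc]
    simp only [Nat.add_sub_cancel]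
    push_cast
    ring
  have hD : (∑ c ∈ Finset.Icc 1 (m - 1) ×ˢ Finset.Icc 1 m,
      ∑ d ∈ Finset.Icc 1 (m - 1) ×ˢ Finset.Icc 1 m,
        if c = (d.1 + 1, d.2) then p ^ 3 - p ^ 4 else 0)
      = ((m - 2 : ℕ) : ℝ) * ((m : ℕ) : ℝ) * (p ^ 3 - p ^ 4) := by
    have inner : ∀ c ∈ Finset.Icc 1 (m - 1) ×ˢ Finset.Icc 1 m,
        (∑ d ∈ Finset.Icc 1 (m - 1) ×ˢ Finset.Icc 1 m,
          if c = (d.1 + 1, d.2) then p ^ 3 - p ^ 4 else 0)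
        = if 2 ≤ c.1 then p ^ 3 - p ^ 4 else 0 := by
      intro c hc
      simp only [Finset.mem_product, Finset.mem_Icc] at hc
      by_cases h2 : 2 ≤ c.1
      · rw [Finset.sum_congr rfl (fun d hd => if_congr
            (show (c = (d.1 + 1, d.2)) ↔ (d = (c.1 - 1, c.2)) from by
              simp only [Prod.ext_iff]; omega) rfl rfl),
          Finset.sum_ite_eq' (Finset.Icc 1 (m - 1) ×ˢ Finset.Icc 1 m)
            ((c.1 - 1, c.2)) (fun _ => p ^ 3 - p ^ 4),
          if_pos (by simp only [Finset.mem_product, Finset.mem_Icc]; omega), if_pos h2]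
      · rw [if_neg h2]
        apply Finset.sum_eq_zero
        intro d hd
        simp only [Finset.mem_product, Finset.mem_Icc] at hd
        rw [if_neg (by simp only [Prod.ext_iff]; omega)]
    rw [Finset.sum_congr rfl inner,
      sum_prod_ite_fst (fun i => 2 ≤ i) (Finset.Icc 1 (m - 1)) (Finset.Icc 1 m) _,
      filter_Icc_card_eq 1 (m - 1) 2 (m - 1) _
        (by intro k; simp only [Finset.mem_Icc]; omega), Nat.card_Icc]
    simp only [Nat.add_sub_cancel]
    have : m - 1 + 1 - 2 = m - 2 := by omega
    rw [this]
    push_cast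
    ring
  rw [hB, hC, hD]
  simp only [Finset.sum_const, Finset.card_product, Nat.card_Icc, nsmul_eq_mul,
    Nat.add_sub_cancel]
  have hm1 : ((m - 1 : ℕ) : ℝ) = (m : ℝ) - 1 := by
    rw [Nat.cast_sub (by omega)]; norm_num
  have hm2 : ((m - 2 : ℕ) : ℝ) = (m : ℝ) - 2 := by
    rw [Nat.cast_sub (by omega)]; norm_num
  push_cast [hm1, hm2]
  ring
lemma expHV (hm : 3 ≤ m) (hWm : ∀ i j, Measurable (W i j))
    (hW01 : ∀ i j ω, W i j ω = 0 ∨ W i j ω = 1) (hE : hEhyp m p W) :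
    ∫ ω, (∑ c ∈ Finset.Icc 1 (m - 1) ×ˢ Finset.Icc 1 m, W c.1 c.2 ω * W (c.1 + 1) c.2 ω) *
         (∑ c ∈ Finset.Icc 1 m ×ˢ Finset.Icc 1 (m - 1), W c.1 c.2 ω * W c.1 (c.2 + 1) ω)
      = (m : ℝ) ^ 2 * ((m : ℝ) - 1) ^ 2 * p ^ 4
        + 4 * ((m : ℝ) - 1) ^ 2 * (p ^ 3 - p ^ 4) := by
  have step := integral_sum_mul_sum (Finset.Icc 1 (m - 1) ×ˢ Finset.Icc 1 m)
    (Finset.Icc 1 m ×ˢ Finset.Icc 1 (m - 1))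
    (fun c ω => W c.1 c.2 ω * W (c.1 + 1) c.2 ω)
    (fun d ω => W d.1 d.2 ω * W d.1 (d.2 + 1) ω)
    (fun c => (hWm c.1 c.2).mul (hWm (c.1 + 1) c.2))
    (fun d => (hWm d.1 d.2).mul (hWm d.1 (d.2 + 1)))
    (fun c ω => habsW2 hW01 _ _ _ _ ω) (fun d ω => habsW2 hW01 _ _ _ _ ω)
  beta_reduce at step
  rw [step]
  have key : ∀ c ∈ Finset.Icc 1 (m - 1) ×ˢ Finset.Icc 1 m,
      ∀ d ∈ Finset.Icc 1 m ×ˢ Finset.Icc 1 (m - 1),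
      ∫ ω, (W c.1 c.2 ω * W (c.1 + 1) c.2 ω) * (W d.1 d.2 ω * W d.1 (d.2 + 1) ω)
        = p ^ 4 + ((if d = c then p ^ 3 - p ^ 4 else 0)
            + ((if d = (c.1 + 1, c.2) then p ^ 3 - p ^ 4 else 0)
              + ((if c = (d.1, d.2 + 1) then p ^ 3 - p ^ 4 else 0)
                + (if (d.1, d.2 + 1) = ((c.1 + 1 : ℕ), c.2) then p ^ 3 - p ^ 4 else 0)))) := by
    intro c hc d hd
    simp only [Finset.mem_product, Finset.mem_Icc] at hc hd
    by_cases h1 : d = c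
    · have h1' : d.1 = c.1 ∧ d.2 = c.2 := Prod.ext_iff.mp h1
      have e : ∫ ω, (W c.1 c.2 ω * W (c.1 + 1) c.2 ω) * (W d.1 d.2 ω * W d.1 (d.2 + 1) ω)
          = ∫ ω, W c.1 c.2 ω * (W (c.1 + 1) c.2 ω * W c.1 (c.2 + 1) ω) :=
        integral_congr_ae (ae_of_all _ fun ω => by
          rw [h1'.1, h1'.2]
          linear_combination W (c.1 + 1) c.2 ω * W c.1 (c.2 + 1) ω *
            hsqW hW01 c.1 c.2 ω)
      rw [if_pos h1, if_neg (by simp only [Prod.ext_iff]; omega),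
        if_neg (by simp only [Prod.ext_iff]; omega),
        if_neg (by simp only [Prod.ext_iff]; omega), e,
        hE3W' hE c.1 c.2 (c.1 + 1) c.2 c.1 (c.2 + 1) (by omega) (by omega) (by omega)
          (by omega) (by omega) (by omega)]
      ring
    · by_cases h2 : d = ((c.1 + 1 : ℕ), c.2)
      · have h2' : d.1 = c.1 + 1 ∧ d.2 = c.2 := by simpa [Prod.ext_iff] using h2
        have e : ∫ ω, (W c.1 c.2 ω * W (c.1 + 1) c.2 ω) * (W d.1 d.2 ω * W d.1 (d.2 + 1) ω)
            = ∫ ω, W c.1 c.2 ω * (W (c.1 + 1) c.2 ω * W (c.1 + 1) (c.2 + 1) ω) :=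
          integral_congr_ae (ae_of_all _ fun ω => by
            rw [h2'.1, h2'.2]
            linear_combination W c.1 c.2 ω * W (c.1 + 1) (c.2 + 1) ω *
              hsqW hW01 (c.1 + 1) c.2 ω)
        rw [if_neg h1, if_pos h2, if_neg (by simp only [Prod.ext_iff]; omega),
          if_neg (by simp only [Prod.ext_iff]; omega), e,
          hE3W' hE c.1 c.2 (c.1 + 1) c.2 (c.1 + 1) (c.2 + 1) (by omega) (by omega)
            (by omega) (by omega) (by omega) (by omega)]
        ring
      · by_cases h3 : c = ((d.1 : ℕ), d.2 + 1)
        · have h3' : c.1 = d.1 ∧ c.2 = d.2 + 1 := by simpa [Prod.ext_iff] using h3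
          have e : ∫ ω, (W c.1 c.2 ω * W (c.1 + 1) c.2 ω) *
                (W d.1 d.2 ω * W d.1 (d.2 + 1) ω)
              = ∫ ω, W d.1 d.2 ω * (W d.1 (d.2 + 1) ω * W (d.1 + 1) (d.2 + 1) ω) :=
            integral_congr_ae (ae_of_all _ fun ω => by
              rw [h3'.1, h3'.2]
              linear_combination W d.1 d.2 ω * W (d.1 + 1) (d.2 + 1) ω *
                hsqW hW01 d.1 (d.2 + 1) ω)
          rw [if_neg h1, if_neg h2, if_pos h3, if_neg (by simp only [Prod.ext_iff]; omega),
            e, hE3W' hE d.1 d.2 d.1 (d.2 + 1) (d.1 + 1) (d.2 + 1) (by omega) (by omega)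
              (by omega) (by omega) (by omega) (by omega)]
          ring
        · by_cases h4 : ((d.1 : ℕ), d.2 + 1) = ((c.1 + 1 : ℕ), c.2)
          · have h4' : d.1 = c.1 + 1 ∧ d.2 + 1 = c.2 := by simpa [Prod.ext_iff] using h4
            have e : ∫ ω, (W c.1 c.2 ω * W (c.1 + 1) c.2 ω) *
                  (W d.1 d.2 ω * W d.1 (d.2 + 1) ω)
                = ∫ ω, W c.1 (d.2 + 1) ω * (W (c.1 + 1) d.2 ω * W (c.1 + 1) (d.2 + 1) ω) :=
              integral_congr_ae (ae_of_all _ fun ω => by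
                rw [h4'.1, ← h4'.2]
                linear_combination W c.1 (d.2 + 1) ω * W (c.1 + 1) d.2 ω *
                  hsqW hW01 (c.1 + 1) (d.2 + 1) ω)
            rw [if_neg h1, if_neg h2, if_neg h3, if_pos h4, e,
              hE3W' hE c.1 (d.2 + 1) (c.1 + 1) d.2 (c.1 + 1) (d.2 + 1) (by omega)
                (by omega) (by omega) (by omega) (by omega) (by omega)]
            ring
          · have h1' : ¬(d.1 = c.1 ∧ d.2 = c.2) := by simpa [Prod.ext_iff] using h1
            have h2' : ¬(d.1 = c.1 + 1 ∧ d.2 = c.2) := by simpa [Prod.ext_iff] using h2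
            have h3' : ¬(c.1 = d.1 ∧ c.2 = d.2 + 1) := by simpa [Prod.ext_iff] using h3
            have h4' : ¬(d.1 = c.1 + 1 ∧ d.2 + 1 = c.2) := by simpa [Prod.ext_iff] using h4
            have e : ∫ ω, (W c.1 c.2 ω * W (c.1 + 1) c.2 ω) *
                  (W d.1 d.2 ω * W d.1 (d.2 + 1) ω)
                = ∫ ω, W c.1 c.2 ω * (W (c.1 + 1) c.2 ω *
                    (W d.1 d.2 ω * W d.1 (d.2 + 1) ω)) :=
              integral_congr_ae (ae_of_all _ fun ω => by ring)
            rw [if_neg h1, if_neg h2, if_neg h3, if_neg h4, e,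
              hE4W' hE c.1 c.2 (c.1 + 1) c.2 d.1 d.2 d.1 (d.2 + 1) (by omega) (by omega)
                (by omega) (by omega) (by omega) (by omega) (by omega) (by omega)
                (by omega) (by omega)]
            ring
  rw [Finset.sum_congr rfl fun c hc => Finset.sum_congr rfl fun d hd => key c hc d hd]
  simp only [Finset.sum_add_distrib]
  have hB : (∑ c ∈ Finset.Icc 1 (m - 1) ×ˢ Finset.Icc 1 m,
      ∑ d ∈ Finset.Icc 1 m ×ˢ Finset.Icc 1 (m - 1),
        if d = c then p ^ 3 - p ^ 4 else 0)
      = ((m - 1 : ℕ) : ℝ) * (((m - 1 : ℕ) : ℝ) * (p ^ 3 - p ^ 4)) := by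
    have inner : ∀ c ∈ Finset.Icc 1 (m - 1) ×ˢ Finset.Icc 1 m,
        (∑ d ∈ Finset.Icc 1 m ×ˢ Finset.Icc 1 (m - 1),
          if d = c then p ^ 3 - p ^ 4 else 0)
        = if c.2 ≤ m - 1 then p ^ 3 - p ^ 4 else 0 := by
      intro c hc
      simp only [Finset.mem_product, Finset.mem_Icc] at hc
      rw [Finset.sum_ite_eq' (Finset.Icc 1 m ×ˢ Finset.Icc 1 (m - 1)) c
        (fun _ => p ^ 3 - p ^ 4)]
      exact if_congr (by simp only [Finset.mem_product, Finset.mem_Icc]; omega) rfl rfl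
    rw [Finset.sum_congr rfl inner,
      sum_prod_ite_snd (fun j => j ≤ m - 1) (Finset.Icc 1 (m - 1)) (Finset.Icc 1 m) _,
      filter_Icc_card_eq 1 m 1 (m - 1) _
        (by intro k; simp only [Finset.mem_Icc]; omega), Nat.card_Icc]
    simp only [Nat.add_sub_cancel]
  have hC : (∑ c ∈ Finset.Icc 1 (m - 1) ×ˢ Finset.Icc 1 m,
      ∑ d ∈ Finset.Icc 1 m ×ˢ Finset.Icc 1 (m - 1),
        if d = ((c.1 + 1 : ℕ), c.2) then p ^ 3 - p ^ 4 else 0)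
      = ((m - 1 : ℕ) : ℝ) * (((m - 1 : ℕ) : ℝ) * (p ^ 3 - p ^ 4)) := by
    have inner : ∀ c ∈ Finset.Icc 1 (m - 1) ×ˢ Finset.Icc 1 m,
        (∑ d ∈ Finset.Icc 1 m ×ˢ Finset.Icc 1 (m - 1),
          if d = ((c.1 + 1 : ℕ), c.2) then p ^ 3 - p ^ 4 else 0)
        = if c.2 ≤ m - 1 then p ^ 3 - p ^ 4 else 0 := by
      intro c hc
      simp only [Finset.mem_product, Finset.mem_Icc] at hc
      rw [Finset.sum_ite_eq' (Finset.Icc 1 m ×ˢ Finset.Icc 1 (m - 1)) ((c.1 + 1, c.2))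
        (fun _ => p ^ 3 - p ^ 4)]
      exact if_congr (by simp only [Finset.mem_product, Finset.mem_Icc]; omega) rfl rfl
    rw [Finset.sum_congr rfl inner,
      sum_prod_ite_snd (fun j => j ≤ m - 1) (Finset.Icc 1 (m - 1)) (Finset.Icc 1 m) _,
      filter_Icc_card_eq 1 m 1 (m - 1) _
        (by intro k; simp only [Finset.mem_Icc]; omega), Nat.card_Icc]
    simp only [Nat.add_sub_cancel]
  have hD : (∑ c ∈ Finset.Icc 1 (m - 1) ×ˢ Finset.Icc 1 m,
      ∑ d ∈ Finset.Icc 1 m ×ˢ Finset.Icc 1 (m - 1),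
        if c = ((d.1 : ℕ), d.2 + 1) then p ^ 3 - p ^ 4 else 0)
      = ((m - 1 : ℕ) : ℝ) * (((m - 1 : ℕ) : ℝ) * (p ^ 3 - p ^ 4)) := by
    have inner : ∀ c ∈ Finset.Icc 1 (m - 1) ×ˢ Finset.Icc 1 m,
        (∑ d ∈ Finset.Icc 1 m ×ˢ Finset.Icc 1 (m - 1),
          if c = ((d.1 : ℕ), d.2 + 1) then p ^ 3 - p ^ 4 else 0)
        = if 2 ≤ c.2 then p ^ 3 - p ^ 4 else 0 := by
      intro c hc
      simp only [Finset.mem_product, Finset.mem_Icc] at hc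
      by_cases h2 : 2 ≤ c.2
      · rw [Finset.sum_congr rfl (fun d hd => if_congr
            (show (c = ((d.1 : ℕ), d.2 + 1)) ↔ (d = (c.1, c.2 - 1)) from by
              simp only [Prod.ext_iff]; omega) rfl rfl),
          Finset.sum_ite_eq' (Finset.Icc 1 m ×ˢ Finset.Icc 1 (m - 1))
            ((c.1, c.2 - 1)) (fun _ => p ^ 3 - p ^ 4),
          if_pos (by simp only [Finset.mem_product, Finset.mem_Icc]; omega), if_pos h2]
      · rw [if_neg h2]
        apply Finset.sum_eq_zero
        intro d hd
        simp only [Finset.mem_product, Finset.mem_Icc] at hd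
        rw [if_neg (by simp only [Prod.ext_iff]; omega)]
    rw [Finset.sum_congr rfl inner,
      sum_prod_ite_snd (fun j => 2 ≤ j) (Finset.Icc 1 (m - 1)) (Finset.Icc 1 m) _,
      filter_Icc_card_eq 1 m 2 m _
        (by intro k; simp only [Finset.mem_Icc]; omega), Nat.card_Icc]
    simp only [Nat.add_sub_cancel]
    have : m + 1 - 2 = m - 1 := by omega
    rw [this]
  have hF : (∑ c ∈ Finset.Icc 1 (m - 1) ×ˢ Finset.Icc 1 m,
      ∑ d ∈ Finset.Icc 1 m ×ˢ Finset.Icc 1 (m - 1),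
        if ((d.1 : ℕ), d.2 + 1) = ((c.1 + 1 : ℕ), c.2) then p ^ 3 - p ^ 4 else 0)
      = ((m - 1 : ℕ) : ℝ) * (((m - 1 : ℕ) : ℝ) * (p ^ 3 - p ^ 4)) := by
    have inner : ∀ c ∈ Finset.Icc 1 (m - 1) ×ˢ Finset.Icc 1 m,
        (∑ d ∈ Finset.Icc 1 m ×ˢ Finset.Icc 1 (m - 1),
          if ((d.1 : ℕ), d.2 + 1) = ((c.1 + 1 : ℕ), c.2) then p ^ 3 - p ^ 4 else 0)
        = if 2 ≤ c.2 then p ^ 3 - p ^ 4 else 0 := by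
      intro c hc
      simp only [Finset.mem_product, Finset.mem_Icc] at hc
      by_cases h2 : 2 ≤ c.2
      · rw [Finset.sum_congr rfl (fun d hd => if_congr
            (show (((d.1 : ℕ), d.2 + 1) = ((c.1 + 1 : ℕ), c.2)) ↔ (d = (c.1 + 1, c.2 - 1)) from by
              simp only [Prod.ext_iff]; omega) rfl rfl),
          Finset.sum_ite_eq' (Finset.Icc 1 m ×ˢ Finset.Icc 1 (m - 1))
            ((c.1 + 1, c.2 - 1)) (fun _ => p ^ 3 - p ^ 4),
          if_pos (by simp only [Finset.mem_product, Finset.mem_Icc]; omega), if_pos h2]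
      · rw [if_neg h2]
        apply Finset.sum_eq_zero
        intro d hd
        simp only [Finset.mem_product, Finset.mem_Icc] at hd
        rw [if_neg (by simp only [Prod.ext_iff]; omega)]
    rw [Finset.sum_congr rfl inner,
      sum_prod_ite_snd (fun j => 2 ≤ j) (Finset.Icc 1 (m - 1)) (Finset.Icc 1 m) _,
      filter_Icc_card_eq 1 m 2 m _
        (by intro k; simp only [Finset.mem_Icc]; omega), Nat.card_Icc]
    simp only [Nat.add_sub_cancel]
    have : m + 1 - 2 = m - 1 := by omega
    rw [this]
  rw [hB, hC, hD, hF]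
  simp only [Finset.sum_const, Finset.card_product, Nat.card_Icc, nsmul_eq_mul,
    Nat.add_sub_cancel]
  have hm1 : ((m - 1 : ℕ) : ℝ) = (m : ℝ) - 1 := by
    rw [Nat.cast_sub (by omega)]; norm_num
  push_cast [hm1]
  ring
omit [IsProbabilityMeasure (ℙ : Measure Ω)] in
lemma hEtrans (hE : hEhyp m p W) : hEhyp m p (fun i j => W j i) := by
  intro l hl
  have hinj : ∀ x ∈ l, ∀ y ∈ l, Prod.swap x = Prod.swap y → x = y :=
    fun x _ y _ hxy => Prod.swap_injective hxy
  have h := hE (l.image Prod.swap) (by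
    intro x hx
    simp only [Finset.mem_image] at hx
    obtain ⟨a, ha, rfl⟩ := hx
    have := hl ha
    simp only [Finset.mem_product] at this ⊢
    exact ⟨this.2, this.1⟩)
  rw [Finset.card_image_of_injOn (fun x hx y hy => hinj x hx y hy)] at h
  simp only [Finset.prod_image hinj, Prod.fst_swap, Prod.snd_swap] at h
  exact h

omit [MeasureSpace Ω] [IsProbabilityMeasure (ℙ : Measure Ω)] in
lemma sum_swap_prod {α : Type*} [AddCommMonoid α] (A B : Finset ℕ) (f : ℕ → ℕ → α) :
    ∑ c ∈ A ×ˢ B, f c.1 c.2 = ∑ c ∈ B ×ˢ A, f c.2 c.1 := by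
  rw [Finset.sum_product, Finset.sum_product]
  exact Finset.sum_comm

omit [MeasureSpace Ω] [IsProbabilityMeasure (ℙ : Measure Ω)] in
lemma sum_Icc_drop_top (hm : 3 ≤ m) (f : ℕ → ℝ) (hf : f m = 0) :
    ∑ i ∈ Finset.Icc 1 m, f i = ∑ i ∈ Finset.Icc 1 (m - 1), f i := by
  have h : Finset.Icc 1 m = insert m (Finset.Icc 1 (m - 1)) := by
    ext k; simp only [Finset.mem_insert, Finset.mem_Icc]; omega
  rw [h, Finset.sum_insert (by simp only [Finset.mem_Icc]; omega), hf, zero_add]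

omit [MeasureSpace Ω] [IsProbabilityMeasure (ℙ : Measure Ω)] in
lemma sum_Icc_drop_bot (hm : 3 ≤ m) (f : ℕ → ℝ) (hf : f 1 = 0) :
    ∑ i ∈ Finset.Icc 1 m, f i = ∑ i ∈ Finset.Icc 1 (m - 1), f (i + 1) := by
  have e1 : Finset.map (addRightEmbedding 1) (Finset.Icc 1 (m - 1)) = Finset.Icc 2 m := by
    rw [map_add_right_Icc]
    congr 1
    omega
  have h : Finset.Icc 1 m = insert 1 (Finset.Icc 2 m) := by
    ext k; simp only [Finset.mem_insert, Finset.mem_Icc]; omega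
  rw [h, Finset.sum_insert (by simp only [Finset.mem_Icc]; omega), hf, zero_add, ← e1,
    Finset.sum_map]
  rfl
end Moments

/-- Under CSR, the variance of the scaled perimeter is
`Var(P_m) = (8/m²) p(1-p) ((7m² - 13m + 4)p² - 7m(m-1)p + 2m²)`. -/
theorem variance_perimeter
    {Ω : Type*} [MeasureSpace Ω] [IsProbabilityMeasure (ℙ : Measure Ω)]
    (m : ℕ) (hm : 3 ≤ m) (p : ℝ) (hp0 : 0 ≤ p) (hp1 : p ≤ 1)
    (Z : ℕ → ℕ → Ω → ℝ)
    (hmeas : ∀ i j, Measurable (Z i j))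
    (hzero : ∀ i j, (i = 0 ∨ i = m + 1 ∨ j = 0 ∨ j = m + 1) → ∀ ω, Z i j ω = 0)
    (hone : ∀ i ∈ Finset.Icc 1 m, ∀ j ∈ Finset.Icc 1 m,
      ℙ {ω | Z i j ω = 1} = ENNReal.ofReal p)
    (hzeroP : ∀ i ∈ Finset.Icc 1 m, ∀ j ∈ Finset.Icc 1 m,
      ℙ {ω | Z i j ω = 0} = ENNReal.ofReal (1 - p))
    (hind : iIndepFun
      (fun q : (Finset.Icc 1 m ×ˢ Finset.Icc 1 m : Finset (ℕ × ℕ)) => Z q.1.1 q.1.2) ℙ) :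
    variance (fun ω => perimSum m (fun i j => Z i j ω)) ℙ =
      (8 / (m : ℝ) ^ 2) * (p * (1 - p)) *
        ((7 * (m : ℝ) ^ 2 - 13 * (m : ℝ) + 4) * p ^ 2 -
          7 * (m : ℝ) * ((m : ℝ) - 1) * p + 2 * (m : ℝ) ^ 2) := by
  classical
  set W : ℕ → ℕ → Ω → ℝ := fun i j ω => if Z i j ω = 1 then 1 else 0 with hWdef
  have hWm : ∀ i j, Measurable (W i j) := fun i j =>
    Measurable.ite (hmeas i j (measurableSet_singleton 1)) measurable_const measurable_const
  have hW01 : ∀ i j ω, W i j ω = 0 ∨ W i j ω = 1 := by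
    intro i j ω
    by_cases h : Z i j ω = 1 <;> simp [hWdef, h]
  have hWb : ∀ i j, (i = 0 ∨ i = m + 1 ∨ j = 0 ∨ j = m + 1) → ∀ ω, W i j ω = 0 := by
    intro i j hij ω
    simp [hWdef, hzero i j hij ω]
  set F : { x // x ∈ (Finset.Icc 1 m ×ˢ Finset.Icc 1 m : Finset (ℕ × ℕ)) } → Ω → ℝ :=
    fun q => W q.1.1 q.1.2 with hFdef
  have hFm : ∀ q, Measurable (F q) := fun q => hWm q.1.1 q.1.2
  have hindF : iIndepFun F ℙ := by
    have hg : Measurable (fun x : ℝ => if x = 1 then (1 : ℝ) else 0) :=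
      Measurable.ite (measurableSet_eq) measurable_const measurable_const
    exact hind.comp (fun _ => fun x : ℝ => if x = 1 then (1 : ℝ) else 0) (fun _ => hg)
  have hIntW : ∀ i j, Integrable (W i j) ℙ := fun i j =>
    integrable_of_bounded_one (hWm i j) (habsW hW01 i j)
  have hFeval : ∀ q : { x // x ∈ (Finset.Icc 1 m ×ˢ Finset.Icc 1 m : Finset (ℕ × ℕ)) },
      ∫ ω, F q ω = p := by
    intro q
    have hq := q.2
    rw [Finset.mem_product] at hq
    have hWi : F q = ({ω | Z q.1.1 q.1.2 ω = 1} : Set Ω).indicator (1 : Ω → ℝ) := by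
      funext ω
      by_cases h : Z q.1.1 q.1.2 ω = 1 <;>
        simp [hFdef, hWdef, Set.indicator_apply, h]
    rw [hWi, integral_indicator_one (show MeasurableSet {ω | Z q.1.1 q.1.2 ω = 1} from
        hmeas _ _ (measurableSet_singleton 1)),
      measureReal_def, hone _ hq.1 _ hq.2, ENNReal.toReal_ofReal hp0]
  have hsplit : ∀ s : Finset { x // x ∈ (Finset.Icc 1 m ×ˢ Finset.Icc 1 m : Finset (ℕ × ℕ)) },
      ∫ ω, ∏ q ∈ s, F q ω = ∏ q ∈ s, ∫ ω, F q ω := by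
    intro s
    induction s using Finset.induction_on with
    | empty => simp
    | @insert a s ha ih =>
      have hfn : (∏ j ∈ s, F j) = (fun a => ∏ j ∈ s, F j a) :=
        funext fun ω => Finset.prod_apply ω s F
      have hPm : Measurable (∏ j ∈ s, F j) := by
        rw [hfn]; exact Finset.measurable_prod s (fun i _ => hFm i)
      have hPb : ∀ ω, |(∏ j ∈ s, F j) ω| ≤ 1 := by
        intro ω
        rw [Finset.prod_apply, Finset.abs_prod]
        exact Finset.prod_le_one (fun i _ => abs_nonneg _) (fun i _ => habsW hW01 _ _ ω)
      have hPint : Integrable (∏ j ∈ s, F j) ℙ := integrable_of_bounded_one hPm hPb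
      have hip : IndepFun (∏ j ∈ s, F j) (F a) ℙ :=
        iIndepFun.indepFun_finset_prod_of_notMem hindF hFm ha
      calc ∫ ω, ∏ q ∈ insert a s, F q ω
          = ∫ ω, (∏ j ∈ s, F j) ω * F a ω := integral_congr_ae (ae_of_all _ fun ω => by
            beta_reduce; rw [Finset.prod_insert ha, Finset.prod_apply]; ring)
        _ = (∫ ω, (∏ j ∈ s, F j) ω) * ∫ ω, F a ω :=
            hip.integral_fun_mul_eq_mul_integral hPint.aestronglyMeasurable (hIntW _ _).aestronglyMeasurable
        _ = (∏ q ∈ s, ∫ ω, F q ω) * ∫ ω, F a ω := by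
            rw [show (∫ ω, (∏ j ∈ s, F j) ω) = ∫ ω, ∏ q ∈ s, F q ω from
              integral_congr_ae (ae_of_all _ fun ω => by
                beta_reduce; rw [Finset.prod_apply]), ih]
        _ = ∏ q ∈ insert a s, ∫ ω, F q ω := by rw [Finset.prod_insert ha]; ring
  have hE : hEhyp m p W := by
    intro l hl
    set s : Finset { x // x ∈ (Finset.Icc 1 m ×ˢ Finset.Icc 1 m : Finset (ℕ × ℕ)) } :=
      l.attach.map ⟨fun x => ⟨x.1, hl x.2⟩, fun x y hxy => Subtype.ext (by
        simpa using congrArg Subtype.val hxy)⟩ with hsdef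
    have hcard : s.card = l.card := by rw [hsdef, Finset.card_map, Finset.card_attach]
    have hprod : ∀ ω, ∏ q ∈ s, F q ω = ∏ c ∈ l, W c.1 c.2 ω := by
      intro ω
      rw [hsdef, Finset.prod_map]
      exact Finset.prod_attach l (fun c => W c.1 c.2 ω)
    calc ∫ ω, ∏ c ∈ l, W c.1 c.2 ω
        = ∫ ω, ∏ q ∈ s, F q ω := integral_congr_ae (ae_of_all _ fun ω => (hprod ω).symm)
      _ = ∏ q ∈ s, ∫ ω, F q ω := hsplit s
      _ = p ^ l.card := by
          rw [Finset.prod_congr rfl (fun q _ => hFeval q), Finset.prod_const, hcard]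
  set S : Ω → ℝ := fun ω => ∑ c ∈ Finset.Icc 1 m ×ˢ Finset.Icc 1 m, W c.1 c.2 ω with hSdef
  set H : Ω → ℝ := fun ω => ∑ c ∈ Finset.Icc 1 (m - 1) ×ˢ Finset.Icc 1 m,
    W c.1 c.2 ω * W (c.1 + 1) c.2 ω with hHdef
  set V : Ω → ℝ := fun ω => ∑ c ∈ Finset.Icc 1 m ×ˢ Finset.Icc 1 (m - 1),
    W c.1 c.2 ω * W c.1 (c.2 + 1) ω with hVdef
  have hSm : Measurable S := by
    rw [hSdef]; exact Finset.measurable_sum _ (fun c _ => hWm c.1 c.2)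
  have hHm : Measurable H := by
    rw [hHdef]; exact Finset.measurable_sum _ (fun c _ => (hWm c.1 c.2).mul (hWm (c.1 + 1) c.2))
  have hVm : Measurable V := by
    rw [hVdef]; exact Finset.measurable_sum _ (fun c _ => (hWm c.1 c.2).mul (hWm c.1 (c.2 + 1)))
  have habsSum : ∀ {α : Type} (A : Finset α) (f : α → ℝ), (∀ c ∈ A, |f c| ≤ 1) →
      |∑ c ∈ A, f c| ≤ (A.card : ℝ) := by
    intro α A f hf
    calc |∑ c ∈ A, f c| ≤ ∑ c ∈ A, |f c| := Finset.abs_sum_le_sum_abs _ _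
      _ ≤ ∑ _c ∈ A, (1 : ℝ) := Finset.sum_le_sum hf
      _ = (A.card : ℝ) := by rw [Finset.sum_const, nsmul_eq_mul, mul_one]
  have hSb : ∀ ω, |S ω| ≤ (((Finset.Icc 1 m ×ˢ Finset.Icc 1 m).card : ℕ) : ℝ) := by
    intro ω; rw [hSdef]
    exact habsSum _ _ (fun c _ => habsW hW01 _ _ ω)
  have hHb : ∀ ω, |H ω| ≤ (((Finset.Icc 1 (m - 1) ×ˢ Finset.Icc 1 m).card : ℕ) : ℝ) := by
    intro ω; rw [hHdef]
    exact habsSum _ _ (fun c _ => habsW2 hW01 _ _ _ _ ω)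
  have hVb : ∀ ω, |V ω| ≤ (((Finset.Icc 1 m ×ˢ Finset.Icc 1 (m - 1)).card : ℕ) : ℝ) := by
    intro ω; rw [hVdef]
    exact habsSum _ _ (fun c _ => habsW2 hW01 _ _ _ _ ω)
  set X : Ω → ℝ := fun ω => 4 * S ω - 2 * H ω - 2 * V ω with hXdef
  have hXm : Measurable X := by
    rw [hXdef]
    exact ((hSm.const_mul 4).sub (hHm.const_mul 2)).sub (hVm.const_mul 2)
  have hXmem : MemLp X 2 ℙ := by
    refine MemLp.of_bound hXm.aestronglyMeasurable
      (4 * (((Finset.Icc 1 m ×ˢ Finset.Icc 1 m).card : ℕ) : ℝ)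
        + 2 * (((Finset.Icc 1 (m - 1) ×ˢ Finset.Icc 1 m).card : ℕ) : ℝ)
        + 2 * (((Finset.Icc 1 m ×ˢ Finset.Icc 1 (m - 1)).card : ℕ) : ℝ))
      (ae_of_all _ fun ω => ?_)
    rw [Real.norm_eq_abs]
    obtain ⟨s1, s2⟩ := abs_le.mp (hSb ω)
    obtain ⟨h1, h2⟩ := abs_le.mp (hHb ω)
    obtain ⟨v1, v2⟩ := abs_le.mp (hVb ω)
    rw [abs_le, hXdef]
    constructor <;> simp only [] <;> linarith
  have hintB : ∀ (f : Ω → ℝ) (C : ℝ), Measurable f → (∀ ω, |f ω| ≤ C) → Integrable f ℙ :=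
    fun f C hf hb => Integrable.mono' (integrable_const C) hf.aestronglyMeasurable
      (ae_of_all _ fun ω => by simpa [Real.norm_eq_abs] using hb ω)
  have hmulb : ∀ (f g : Ω → ℝ) (Cf Cg : ℝ), (∀ ω, |f ω| ≤ Cf) → (∀ ω, |g ω| ≤ Cg) →
      ∀ ω, |f ω * g ω| ≤ Cf * Cg := by
    intro f g Cf Cg hf hg ω
    rw [abs_mul]
    exact mul_le_mul (hf ω) (hg ω) (abs_nonneg _) ((abs_nonneg _).trans (hf ω))
  have iS : Integrable S ℙ := hintB S _ hSm hSb
  have iH : Integrable H ℙ := hintB H _ hHm hHb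
  have iV : Integrable V ℙ := hintB V _ hVm hVb
  have iSS : Integrable (fun ω => S ω * S ω) ℙ :=
    hintB _ _ (hSm.mul hSm) (hmulb S S _ _ hSb hSb)
  have iHH : Integrable (fun ω => H ω * H ω) ℙ :=
    hintB _ _ (hHm.mul hHm) (hmulb H H _ _ hHb hHb)
  have iVV : Integrable (fun ω => V ω * V ω) ℙ :=
    hintB _ _ (hVm.mul hVm) (hmulb V V _ _ hVb hVb)
  have iSH : Integrable (fun ω => S ω * H ω) ℙ :=
    hintB _ _ (hSm.mul hHm) (hmulb S H _ _ hSb hHb)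
  have iSV : Integrable (fun ω => S ω * V ω) ℙ :=
    hintB _ _ (hSm.mul hVm) (hmulb S V _ _ hSb hVb)
  have iHV : Integrable (fun ω => H ω * V ω) ℙ :=
    hintB _ _ (hHm.mul hVm) (hmulb H V _ _ hHb hVb)
  -- expectation values
  have eS : ∫ ω, S ω = (m : ℝ) ^ 2 * p := by
    simp only [hSdef]; exact expS hm hWm hW01 hE
  have eH : ∫ ω, H ω = (m : ℝ) * ((m : ℝ) - 1) * p ^ 2 := by
    simp only [hHdef]; exact expH hm hWm hW01 hE
  have hWmt : ∀ i j, Measurable ((fun i j => W j i) i j) := fun i j => hWm j i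
  have hW01t : ∀ i j ω, (fun i j => W j i) i j ω = 0 ∨ (fun i j => W j i) i j ω = 1 :=
    fun i j ω => hW01 j i ω
  have hEt : hEhyp m p (fun i j => W j i) := hEtrans hE
  have eV : ∫ ω, V ω = (m : ℝ) * ((m : ℝ) - 1) * p ^ 2 := by
    simp only [hVdef]
    have h := expH hm hWmt hW01t hEt
    rw [show (∫ ω, ∑ c ∈ Finset.Icc 1 (m - 1) ×ˢ Finset.Icc 1 m,
          W c.2 c.1 ω * W c.2 (c.1 + 1) ω)
        = ∫ ω, ∑ c ∈ Finset.Icc 1 m ×ˢ Finset.Icc 1 (m - 1),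
          W c.1 c.2 ω * W c.1 (c.2 + 1) ω from
      integral_congr_ae (ae_of_all _ fun ω =>
        sum_swap_prod (Finset.Icc 1 (m - 1)) (Finset.Icc 1 m)
          (fun i j => W j i ω * W j (i + 1) ω))] at h
    exact h
  have eSS : ∫ ω, S ω * S ω = (m : ℝ) ^ 4 * p ^ 2 + (m : ℝ) ^ 2 * (p - p ^ 2) := by
    simp only [hSdef]; exact expSS hm hWm hW01 hE
  have eSH : ∫ ω, S ω * H ω = (m : ℝ) ^ 3 * ((m : ℝ) - 1) * p ^ 3
      + 2 * (m : ℝ) * ((m : ℝ) - 1) * (p ^ 2 - p ^ 3) := by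
    simp only [hSdef, hHdef]; exact expSH hm hWm hW01 hE
  have eSV : ∫ ω, S ω * V ω = (m : ℝ) ^ 3 * ((m : ℝ) - 1) * p ^ 3
      + 2 * (m : ℝ) * ((m : ℝ) - 1) * (p ^ 2 - p ^ 3) := by
    simp only [hSdef, hVdef]
    have h := expSH hm hWmt hW01t hEt
    rw [show (∫ ω, (∑ c ∈ Finset.Icc 1 m ×ˢ Finset.Icc 1 m, W c.2 c.1 ω) *
          (∑ c ∈ Finset.Icc 1 (m - 1) ×ˢ Finset.Icc 1 m, W c.2 c.1 ω * W c.2 (c.1 + 1) ω))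
        = ∫ ω, (∑ c ∈ Finset.Icc 1 m ×ˢ Finset.Icc 1 m, W c.1 c.2 ω) *
          (∑ c ∈ Finset.Icc 1 m ×ˢ Finset.Icc 1 (m - 1),
            W c.1 c.2 ω * W c.1 (c.2 + 1) ω) from
      integral_congr_ae (ae_of_all _ fun ω => by
        beta_reduce
        rw [sum_swap_prod (Finset.Icc 1 (m - 1)) (Finset.Icc 1 m)
            (fun i j => W j i ω * W j (i + 1) ω),
          ← sum_swap_prod (Finset.Icc 1 m) (Finset.Icc 1 m) (fun i j => W i j ω)])] at h
    exact h
  have eHH : ∫ ω, H ω * H ω = (m : ℝ) ^ 2 * ((m : ℝ) - 1) ^ 2 * p ^ 4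
      + (m : ℝ) * ((m : ℝ) - 1) * (p ^ 2 - p ^ 4)
      + 2 * (m : ℝ) * ((m : ℝ) - 2) * (p ^ 3 - p ^ 4) := by
    simp only [hHdef]; exact expHH hm hWm hW01 hE
  have eVV : ∫ ω, V ω * V ω = (m : ℝ) ^ 2 * ((m : ℝ) - 1) ^ 2 * p ^ 4
      + (m : ℝ) * ((m : ℝ) - 1) * (p ^ 2 - p ^ 4)
      + 2 * (m : ℝ) * ((m : ℝ) - 2) * (p ^ 3 - p ^ 4) := by
    simp only [hVdef]
    have h := expHH hm hWmt hW01t hEt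
    rw [show (∫ ω, (∑ c ∈ Finset.Icc 1 (m - 1) ×ˢ Finset.Icc 1 m,
            W c.2 c.1 ω * W c.2 (c.1 + 1) ω) *
          (∑ c ∈ Finset.Icc 1 (m - 1) ×ˢ Finset.Icc 1 m, W c.2 c.1 ω * W c.2 (c.1 + 1) ω))
        = ∫ ω, (∑ c ∈ Finset.Icc 1 m ×ˢ Finset.Icc 1 (m - 1),
            W c.1 c.2 ω * W c.1 (c.2 + 1) ω) *
          (∑ c ∈ Finset.Icc 1 m ×ˢ Finset.Icc 1 (m - 1),
            W c.1 c.2 ω * W c.1 (c.2 + 1) ω) from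
      integral_congr_ae (ae_of_all _ fun ω => by
        beta_reduce
        rw [sum_swap_prod (Finset.Icc 1 (m - 1)) (Finset.Icc 1 m)
            (fun i j => W j i ω * W j (i + 1) ω)])] at h
    exact h
  have eHV : ∫ ω, H ω * V ω = (m : ℝ) ^ 2 * ((m : ℝ) - 1) ^ 2 * p ^ 4
      + 4 * ((m : ℝ) - 1) ^ 2 * (p ^ 3 - p ^ 4) := by
    simp only [hHdef, hVdef]; exact expHV hm hWm hW01 hE
  -- mean and second moment of X
  have j1 : Integrable (fun ω => 4 * S ω) ℙ := iS.const_mul 4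
  have j2 : Integrable (fun ω => 2 * H ω) ℙ := iH.const_mul 2
  have j3 : Integrable (fun ω => 2 * V ω) ℙ := iV.const_mul 2
  have j4 : Integrable (fun ω => 4 * S ω - 2 * H ω) ℙ := j1.sub j2
  have eX : ∫ ω, X ω = 4 * ((m : ℝ) ^ 2 * p) - 2 * ((m : ℝ) * ((m : ℝ) - 1) * p ^ 2)
      - 2 * ((m : ℝ) * ((m : ℝ) - 1) * p ^ 2) := by
    simp only [hXdef]
    rw [integral_sub j4 j3, integral_sub j1 j2,
      integral_const_mul _ _, integral_const_mul _ _, integral_const_mul _ _, eS, eH, eV]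
  have eX2 : ∫ ω, X ω * X ω =
      16 * ((m : ℝ) ^ 4 * p ^ 2 + (m : ℝ) ^ 2 * (p - p ^ 2))
      + 4 * ((m : ℝ) ^ 2 * ((m : ℝ) - 1) ^ 2 * p ^ 4
          + (m : ℝ) * ((m : ℝ) - 1) * (p ^ 2 - p ^ 4)
          + 2 * (m : ℝ) * ((m : ℝ) - 2) * (p ^ 3 - p ^ 4))
      + 4 * ((m : ℝ) ^ 2 * ((m : ℝ) - 1) ^ 2 * p ^ 4
          + (m : ℝ) * ((m : ℝ) - 1) * (p ^ 2 - p ^ 4)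
          + 2 * (m : ℝ) * ((m : ℝ) - 2) * (p ^ 3 - p ^ 4))
      - 16 * ((m : ℝ) ^ 3 * ((m : ℝ) - 1) * p ^ 3
          + 2 * (m : ℝ) * ((m : ℝ) - 1) * (p ^ 2 - p ^ 3))
      - 16 * ((m : ℝ) ^ 3 * ((m : ℝ) - 1) * p ^ 3
          + 2 * (m : ℝ) * ((m : ℝ) - 1) * (p ^ 2 - p ^ 3))
      + 8 * ((m : ℝ) ^ 2 * ((m : ℝ) - 1) ^ 2 * p ^ 4
          + 4 * ((m : ℝ) - 1) ^ 2 * (p ^ 3 - p ^ 4)) := by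
    have hpt : (fun ω => X ω * X ω) = (fun ω =>
        16 * (S ω * S ω) + 4 * (H ω * H ω) + 4 * (V ω * V ω)
        - 16 * (S ω * H ω) - 16 * (S ω * V ω) + 8 * (H ω * V ω)) := by
      funext ω; simp only [hXdef]; ring
    rw [show (∫ ω, X ω * X ω) = ∫ ω, (16 * (S ω * S ω) + 4 * (H ω * H ω) + 4 * (V ω * V ω)
        - 16 * (S ω * H ω) - 16 * (S ω * V ω) + 8 * (H ω * V ω)) from by rw [hpt]]
    have k1 : Integrable (fun ω => 16 * (S ω * S ω)) ℙ := iSS.const_mul 16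
    have k2 : Integrable (fun ω => 4 * (H ω * H ω)) ℙ := iHH.const_mul 4
    have k3 : Integrable (fun ω => 4 * (V ω * V ω)) ℙ := iVV.const_mul 4
    have k4 : Integrable (fun ω => 16 * (S ω * H ω)) ℙ := iSH.const_mul 16
    have k5 : Integrable (fun ω => 16 * (S ω * V ω)) ℙ := iSV.const_mul 16
    have k6 : Integrable (fun ω => 8 * (H ω * V ω)) ℙ := iHV.const_mul 8
    have k7 : Integrable (fun ω => 16 * (S ω * S ω) + 4 * (H ω * H ω)) ℙ := k1.add k2
    have k8 : Integrable (fun ω => 16 * (S ω * S ω) + 4 * (H ω * H ω) + 4 * (V ω * V ω)) ℙ :=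
      k7.add k3
    have k9 : Integrable (fun ω => 16 * (S ω * S ω) + 4 * (H ω * H ω) + 4 * (V ω * V ω)
        - 16 * (S ω * H ω)) ℙ := k8.sub k4
    have k10 : Integrable (fun ω => 16 * (S ω * S ω) + 4 * (H ω * H ω) + 4 * (V ω * V ω)
        - 16 * (S ω * H ω) - 16 * (S ω * V ω)) ℙ := k9.sub k5
    rw [integral_add k10 k6, integral_sub k9 k5, integral_sub k8 k4, integral_add k7 k3,
      integral_add k1 k2,
      integral_const_mul _ _, integral_const_mul _ _, integral_const_mul _ _, integral_const_mul _ _,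
      integral_const_mul _ _, integral_const_mul _ _, eSS, eHH, eVV, eSH, eSV, eHV]
  -- a.e. 0/1-valuedness of Z on the grid
  have haeZ : ∀ᵐ ω ∂(ℙ : Measure Ω), ∀ i ∈ Finset.Icc 1 m, ∀ j ∈ Finset.Icc 1 m,
      (Z i j ω = 0 ∨ Z i j ω = 1) := by
    rw [Filter.eventually_all_finset]
    intro i hi
    rw [Filter.eventually_all_finset]
    intro j hj
    have h1 : MeasurableSet {ω | Z i j ω = 1} := hmeas i j (measurableSet_singleton 1)
    have h0 : MeasurableSet {ω | Z i j ω = 0} := hmeas i j (measurableSet_singleton 0)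
    have hdisj : Disjoint {ω | Z i j ω = 0} {ω | Z i j ω = 1} := by
      rw [Set.disjoint_left]
      intro ω hω0 hω1
      simp only [Set.mem_setOf_eq] at hω0 hω1
      rw [hω0] at hω1
      norm_num at hω1
    have hu : ℙ ({ω | Z i j ω = 0} ∪ {ω | Z i j ω = 1}) = 1 := by
      rw [measure_union hdisj h1, hzeroP i hi j hj, hone i hi j hj,
        ← ENNReal.ofReal_add (by linarith) hp0]
      norm_num
    have hcompl : ℙ (({ω | Z i j ω = 0} ∪ {ω | Z i j ω = 1})ᶜ) = 0 :=
      (prob_compl_eq_zero_iff (h0.union h1)).mpr hu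
    rw [ae_iff]
    convert hcompl using 2
    ext ω; simp
  -- a.e. identity between the perimeter and (1/m) * X
  have haeEq : (fun ω => perimSum m (fun i j => Z i j ω)) =ᵐ[ℙ]
      (fun ω => (1 / (m : ℝ)) * X ω) := by
    filter_upwards [haeZ] with ω hω
    have hZW : ∀ a b, a ≤ m + 1 → b ≤ m + 1 → Z a b ω = W a b ω := by
      intro a b hA hB
      by_cases hbd : a = 0 ∨ a = m + 1 ∨ b = 0 ∨ b = m + 1
      · rw [hzero a b hbd ω, hWb a b hbd ω]
      · have haI : a ∈ Finset.Icc 1 m := by rw [Finset.mem_Icc]; omega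
        have hbI : b ∈ Finset.Icc 1 m := by rw [Finset.mem_Icc]; omega
        rcases hω a haI b hbI with h | h <;> simp [hWdef, h]
    show perimSum m (fun i j => Z i j ω) = (1 / (m : ℝ)) * X ω
    rw [perimSum]
    beta_reduce
    congr 1
    have hstep1 : (∑ i ∈ Finset.Icc 1 m, ∑ j ∈ Finset.Icc 1 m,
        if Z i j ω = 1 then
          4 - (Z (i - 1) j ω + Z (i + 1) j ω + Z i (j - 1) ω + Z i (j + 1) ω) else 0)
        = ∑ i ∈ Finset.Icc 1 m, ∑ j ∈ Finset.Icc 1 m,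
          W i j ω * (4 - (W (i - 1) j ω + W (i + 1) j ω + W i (j - 1) ω + W i (j + 1) ω)) := by
      refine Finset.sum_congr rfl fun i hi => Finset.sum_congr rfl fun j hj => ?_
      rw [Finset.mem_Icc] at hi hj
      rw [hZW (i - 1) j (by omega) (by omega), hZW (i + 1) j (by omega) (by omega),
        hZW i (j - 1) (by omega) (by omega), hZW i (j + 1) (by omega) (by omega)]
      rcases hω i (by rw [Finset.mem_Icc]; omega) j (by rw [Finset.mem_Icc]; omega) with h | h
      · rw [if_neg (by rw [h]; norm_num), show W i j ω = 0 from by simp [hWdef, h]]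
        ring
      · rw [if_pos h, show W i j ω = 1 from by simp [hWdef, h]]
        ring
    rw [hstep1]
    have hA : ∑ i ∈ Finset.Icc 1 m, ∑ j ∈ Finset.Icc 1 m, W i j ω = S ω := by
      simp only [hSdef]
      rw [Finset.sum_product]
    have hB : ∑ i ∈ Finset.Icc 1 m, ∑ j ∈ Finset.Icc 1 m, W i j ω * W (i + 1) j ω = H ω := by
      rw [sum_Icc_drop_top hm (fun i => ∑ j ∈ Finset.Icc 1 m, W i j ω * W (i + 1) j ω)
        (Finset.sum_eq_zero fun j _ => by rw [hWb (m + 1) j (by omega) ω, mul_zero])]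
      simp only [hHdef]
      rw [Finset.sum_product]
    have hC : ∑ i ∈ Finset.Icc 1 m, ∑ j ∈ Finset.Icc 1 m, W i j ω * W (i - 1) j ω = H ω := by
      rw [sum_Icc_drop_bot hm (fun i => ∑ j ∈ Finset.Icc 1 m, W i j ω * W (i - 1) j ω)
        (Finset.sum_eq_zero fun j _ => by
          rw [show (1 : ℕ) - 1 = 0 from rfl, hWb 0 j (by omega) ω, mul_zero])]
      simp only [Nat.add_sub_cancel, hHdef]
      rw [Finset.sum_product]
      exact Finset.sum_congr rfl fun i _ => Finset.sum_congr rfl fun j _ => mul_comm _ _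
    have hD : ∑ i ∈ Finset.Icc 1 m, ∑ j ∈ Finset.Icc 1 m, W i j ω * W i (j + 1) ω = V ω := by
      rw [Finset.sum_congr rfl (fun i _ =>
        sum_Icc_drop_top hm (fun j => W i j ω * W i (j + 1) ω)
          (show W i m ω * W i (m + 1) ω = 0 from by
            rw [hWb i (m + 1) (by omega) ω, mul_zero]))]
      simp only [hVdef]
      rw [Finset.sum_product]
    have hE5 : ∑ i ∈ Finset.Icc 1 m, ∑ j ∈ Finset.Icc 1 m, W i j ω * W i (j - 1) ω = V ω := by
      rw [Finset.sum_congr rfl (fun i _ =>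
        sum_Icc_drop_bot hm (fun j => W i j ω * W i (j - 1) ω)
          (show W i 1 ω * W i (1 - 1) ω = 0 from by
            rw [show (1 : ℕ) - 1 = 0 from rfl, hWb i 0 (by omega) ω, mul_zero]))]
      simp only [Nat.add_sub_cancel, hVdef]
      rw [Finset.sum_product]
      exact Finset.sum_congr rfl fun i _ => Finset.sum_congr rfl fun j _ => mul_comm _ _
    have e2 : (∑ i ∈ Finset.Icc 1 m, ∑ j ∈ Finset.Icc 1 m,
        W i j ω * (4 - (W (i - 1) j ω + W (i + 1) j ω + W i (j - 1) ω + W i (j + 1) ω)))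
        = 4 * (∑ i ∈ Finset.Icc 1 m, ∑ j ∈ Finset.Icc 1 m, W i j ω)
          - (∑ i ∈ Finset.Icc 1 m, ∑ j ∈ Finset.Icc 1 m, W i j ω * W (i - 1) j ω)
          - (∑ i ∈ Finset.Icc 1 m, ∑ j ∈ Finset.Icc 1 m, W i j ω * W (i + 1) j ω)
          - (∑ i ∈ Finset.Icc 1 m, ∑ j ∈ Finset.Icc 1 m, W i j ω * W i (j - 1) ω)
          - (∑ i ∈ Finset.Icc 1 m, ∑ j ∈ Finset.Icc 1 m, W i j ω * W i (j + 1) ω) := by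
      rw [Finset.sum_congr rfl (fun i _ => Finset.sum_congr rfl (fun j _ =>
        show W i j ω * (4 - (W (i - 1) j ω + W (i + 1) j ω + W i (j - 1) ω + W i (j + 1) ω))
          = 4 * W i j ω - W i j ω * W (i - 1) j ω - W i j ω * W (i + 1) j ω
            - W i j ω * W i (j - 1) ω - W i j ω * W i (j + 1) ω from by ring))]
      simp only [Finset.sum_sub_distrib, ← Finset.mul_sum]
    rw [e2, hA, hB, hC, hD, hE5]
    simp only [hXdef]
    ring
  -- conclude
  rw [variance_congr_ae haeEq, variance_const_mul, variance_eq_sub hXmem]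
  have hX2 : (ℙ : Measure Ω)[X ^ 2] = ∫ ω, X ω * X ω := by
    apply integral_congr_ae (ae_of_all _ fun ω => ?_)
    rw [Pi.pow_apply, sq]
  rw [hX2, eX2, show (ℙ : Measure Ω)[X] = ∫ ω, X ω from rfl, eX]
  have hm0 : (m : ℝ) ≠ 0 := Nat.cast_ne_zero.mpr (by omega)
  field_simp
  ring
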